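/- Let V be a random variable on a finite set 𝒱 with Shannon entropy H(V) ≥ λ, and let V₁,…,V_m be i.i.d. copies of V. Then the probability that V₁,…,V_m are all distinct is at least ((λ − 1 − log₂ m)/log₂ |𝒱|)^{m−1}. -/

import Mathlib

open Finset

/-- `x log(c/x) ≤ c - x` for `x ≥ 0`, `c > 0`. -/
private lemma aux_log_le (x c : ℝ) (hx : 0 ≤ x) (hc : 0 < c) :
    x * Real.log (c / x) ≤ c - x := by
  rcases eq_or_lt_of_le hx with h | h
  · simp [← h, hc.le]
  · have h1 : Real.log (c / x) ≤ c / x - 1 := Real.log_le_sub_one_of_pos (div_pos hc h)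
    have h2 : x * Real.log (c / x) ≤ x * (c / x - 1) := mul_le_mul_of_nonneg_left h1 h.le
    have h3 : x * (c / x - 1) = c - x := by field_simp
    linarith

private lemma aux_binent (x : ℝ) (hx : 0 ≤ x) :
    -(x * Real.log x) ≤ x * Real.log 2 + (1 / 2 - x) := by
  rcases eq_or_lt_of_le hx with h | h
  · rw [← h]; norm_num
  · have h1 := aux_log_le x (1 / 2) hx one_half_pos
    have h2 : Real.log ((1 / 2) / x) = -Real.log 2 - Real.log x := by
      rw [Real.log_div (by norm_num) h.ne', show (1:ℝ)/2 = 2⁻¹ by norm_num, Real.log_inv]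
    rw [h2] at h1
    nlinarith

/-- Grouping bound: `∑_{v∈B} -p v log p v ≤ S log |B| - S log S`. -/
private lemma aux_group {V : Type*} [DecidableEq V] (p : V → ℝ)
    (hp0 : ∀ v, 0 ≤ p v) (B : Finset V) (hB : B.Nonempty) :
    ∑ v ∈ B, -(p v * Real.log (p v)) ≤
      (∑ v ∈ B, p v) * Real.log B.card - (∑ v ∈ B, p v) * Real.log (∑ v ∈ B, p v) := by
  have hS0 : 0 ≤ ∑ v ∈ B, p v := Finset.sum_nonneg fun v _ => hp0 v
  rcases eq_or_lt_of_le hS0 with h | h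
  · have hz : ∀ v ∈ B, p v = 0 :=
      (Finset.sum_eq_zero_iff_of_nonneg (fun v _ => hp0 v)).mp h.symm
    rw [← h]
    simp only [zero_mul, sub_zero, zero_sub, neg_zero, sub_self]
    rw [Finset.sum_eq_zero]
    intro v hv; rw [hz v hv]; ring
  · set S := ∑ v ∈ B, p v with hS
    have hn : (0:ℝ) < B.card := by
      exact_mod_cast Finset.card_pos.mpr hB
    have hc : 0 < S / B.card := div_pos h hn
    have key : ∀ v ∈ B, -(p v * Real.log (p v)) ≤
        p v * Real.log B.card - p v * Real.log S + (S / B.card - p v) := by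
      intro v hv
      rcases eq_or_lt_of_le (hp0 v) with h0 | h0
      · rw [← h0]
        simp only [zero_mul, neg_zero, sub_zero, zero_sub, sub_zero]
        nlinarith
      · have h1 := aux_log_le (p v) (S / B.card) (hp0 v) hc
        have h2 : Real.log (S / B.card / p v) =
            Real.log S - Real.log B.card - Real.log (p v) := by
          rw [Real.log_div hc.ne' h0.ne', Real.log_div h.ne' hn.ne']
        nlinarith
    calc ∑ v ∈ B, -(p v * Real.log (p v))
        ≤ ∑ v ∈ B, (p v * Real.log B.card - p v * Real.log S + (S / B.card - p v)) :=
          Finset.sum_le_sum key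
      _ = S * Real.log B.card - S * Real.log S := by
          rw [Finset.sum_add_distrib, Finset.sum_sub_distrib, Finset.sum_sub_distrib,
            ← Finset.sum_mul, ← Finset.sum_mul, Finset.sum_const, nsmul_eq_mul, ← hS]
          field_simp
          ring

private lemma aux_ent {V : Type*} [Fintype V] [DecidableEq V]
    (p : V → ℝ) (hp0 : ∀ v, 0 ≤ p v) (hp1 : ∑ v, p v = 1)
    (lam : ℝ) (hH : lam ≤ ∑ v, -(p v * Real.logb 2 (p v)))
    (m : ℕ) (hm : 1 ≤ m)
    (hlam : 0 ≤ lam - 1 - Real.logb 2 m)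
    (hV : 2 ≤ Fintype.card V)
    (A : Finset V) (hA1 : A.Nonempty) (hAm : A.card ≤ m) :
    (lam - 1 - Real.logb 2 m) / Real.logb 2 (Fintype.card V) ≤ 1 - ∑ v ∈ A, p v := by
  have hlog2 : (0:ℝ) < Real.log 2 := Real.log_pos (by norm_num)
  have hN1 : (1:ℝ) < (Fintype.card V : ℝ) := by exact_mod_cast hV
  have hlogN : (0:ℝ) < Real.log (Fintype.card V) := Real.log_pos hN1
  -- natural-log entropy
  set Hn := ∑ v, -(p v * Real.log (p v)) with hHn
  have hHnat : lam * Real.log 2 ≤ Hn := by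
    have e : ∑ v, -(p v * Real.logb 2 (p v)) = Hn / Real.log 2 := by
      rw [hHn, Finset.sum_div]
      refine Finset.sum_congr rfl fun v _ => ?_
      rw [Real.logb]; ring
    rw [e, le_div_iff₀ hlog2] at hH
    exact hH
  -- entropy at most log N
  have hHle : Hn ≤ Real.log (Fintype.card V) := by
    have huniv : (Finset.univ : Finset V).Nonempty :=
      Finset.univ_nonempty_iff.mpr (Fintype.card_pos_iff.mp (by omega))
    have := aux_group p hp0 Finset.univ huniv
    rw [hp1] at this
    rw [hHn]
    simpa using this
  -- 2 m ≤ N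
  have hlogm : Real.log m ≤ (lam - 1) * Real.log 2 := by
    have : Real.logb 2 m ≤ lam - 1 := by linarith
    rw [Real.logb, div_le_iff₀ hlog2] at this
    linarith [this]
  have hm0 : (0:ℝ) < (m:ℝ) := by exact_mod_cast hm
  have h2m : 2 * (m:ℝ) ≤ (Fintype.card V : ℝ) := by
    have hl : Real.log (2 * m) ≤ Real.log (Fintype.card V) := by
      rw [Real.log_mul (by norm_num) hm0.ne']
      nlinarith
    exact (Real.log_le_log_iff (by positivity) (by positivity)).mp hl
  have hm1 : (1:ℝ) ≤ (m:ℝ) := by exact_mod_cast hm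
  have hmN : (m:ℝ) ≤ (Fintype.card V : ℝ) - 1 := by linarith
  -- split sums
  set S := ∑ v ∈ A, p v with hSdef
  set S' := ∑ v ∈ Aᶜ, p v with hS'def
  have hsum : S + S' = 1 := by rw [hSdef, hS'def, Finset.sum_add_sum_compl, hp1]
  have hS0 : 0 ≤ S := Finset.sum_nonneg fun v _ => hp0 v
  have hS'0 : 0 ≤ S' := Finset.sum_nonneg fun v _ => hp0 v
  have ha1 : 1 ≤ A.card := Finset.card_pos.mpr hA1
  have haN : (A.card : ℝ) ≤ (m:ℝ) := by exact_mod_cast hAm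
  have hcompl_card : Aᶜ.card = Fintype.card V - A.card := Finset.card_compl A
  have hAcN : (Aᶜ.card : ℝ) ≤ (Fintype.card V : ℝ) := by
    exact_mod_cast Finset.card_le_card (Finset.subset_univ _)
  have hAc1 : 1 ≤ Aᶜ.card := by
    have : A.card < Fintype.card V := by
      have : (A.card : ℝ) < (Fintype.card V : ℝ) := by linarith
      exact_mod_cast this
    omega
  have hAcne : Aᶜ.Nonempty := Finset.card_pos.mp (by omega)
  have g1 := aux_group p hp0 A hA1
  have g2 := aux_group p hp0 Aᶜ hAcne
  have hsplit : Hn = (∑ v ∈ A, -(p v * Real.log (p v)))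
      + ∑ v ∈ Aᶜ, -(p v * Real.log (p v)) := (Finset.sum_add_sum_compl A _).symm
  have b1 := aux_binent S hS0
  have b2 := aux_binent S' hS'0
  -- monotonicity of logs
  have hla : Real.log A.card ≤ Real.log m :=
    Real.log_le_log (by exact_mod_cast ha1) haN
  have hlc : Real.log Aᶜ.card ≤ Real.log (Fintype.card V) :=
    Real.log_le_log (by exact_mod_cast hAc1) hAcN
  have hlm0 : 0 ≤ Real.log m := Real.log_nonneg (by exact_mod_cast hm)
  -- combine
  have main : (lam - 1) * Real.log 2 - Real.log m ≤ S' * Real.log (Fintype.card V) := by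
    nlinarith [mul_le_mul_of_nonneg_left hla hS0, mul_le_mul_of_nonneg_left hlc hS'0,
      mul_le_mul_of_nonneg_right (show S ≤ 1 by linarith) hlm0]
  rw [Real.logb, Real.logb, div_le_iff₀ (div_pos hlogN hlog2)]
  have h1S : 1 - S = S' := by linarith
  rw [h1S]
  have e1 : S' * (Real.log (Fintype.card V) / Real.log 2)
      = S' * Real.log (Fintype.card V) / Real.log 2 := by ring
  rw [e1, le_div_iff₀ hlog2]
  have e2 : (lam - 1 - Real.log m / Real.log 2) * Real.log 2
      = (lam - 1) * Real.log 2 - Real.log m := by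
    field_simp
  rw [e2]
  linarith [main]

private lemma aux_step {V : Type*} [Fintype V] [DecidableEq V]
    (p : V → ℝ) (hp0 : ∀ v, 0 ≤ p v) (hp1 : ∑ v, p v = 1)
    (lam : ℝ) (hH : lam ≤ ∑ v, -(p v * Real.logb 2 (p v)))
    (m : ℕ) (hm : 1 ≤ m)
    (hlam : 0 ≤ lam - 1 - Real.logb 2 m)
    (hV : 2 ≤ Fintype.card V)
    (n : ℕ) (hn1 : 1 ≤ n) (hnm : n ≤ m) :
    ((lam - 1 - Real.logb 2 m) / Real.logb 2 (Fintype.card V)) *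
      (∑ f : Fin n → V, if Function.Injective f then ∏ i, p (f i) else 0)
    ≤ ∑ f : Fin (n+1) → V, if Function.Injective f then ∏ i, p (f i) else 0 := by
  set r := (lam - 1 - Real.logb 2 m) / Real.logb 2 (Fintype.card V) with hr
  have hsum : ∑ f : Fin (n+1) → V, (if Function.Injective f then ∏ i, p (f i) else 0)
      = ∑ x : V × (Fin n → V),
          if Function.Injective (Fin.cons x.1 x.2 : Fin (n+1) → V)
          then ∏ i, p ((Fin.cons x.1 x.2 : Fin (n+1) → V) i) else 0 := by
    rw [← Equiv.sum_comp (Fin.consEquiv (fun _ : Fin (n+1) => V))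
      (fun f => if Function.Injective f then ∏ i, p (f i) else 0)]
    rfl
  rw [hsum, Fintype.sum_prod_type, Finset.sum_comm]
  have inner : ∀ g : Fin n → V,
      ∑ v : V, (if Function.Injective (Fin.cons v g : Fin (n+1) → V)
          then ∏ i, p ((Fin.cons v g : Fin (n+1) → V) i) else 0)
      = if Function.Injective g
        then (∑ v ∈ (Finset.univ.image g)ᶜ, p v) * ∏ i, p (g i) else 0 := by
    intro g
    by_cases hg : Function.Injective g
    · rw [if_pos hg, Finset.sum_mul]
      have hrw : ∑ v ∈ (Finset.univ.image g)ᶜ, (p v * ∏ i, p (g i))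
          = ∑ v : V, if v ∈ (Finset.univ.image g)ᶜ then p v * ∏ i, p (g i) else 0 := by
        rw [Finset.sum_ite_mem, Finset.univ_inter]
      rw [hrw]
      refine Finset.sum_congr rfl fun v _ => ?_
      have hmem : v ∈ (Finset.univ.image g)ᶜ ↔ v ∉ Set.range g := by
        simp [Finset.mem_compl, Set.mem_range]
      have hinj : Function.Injective (Fin.cons v g : Fin (n+1) → V)
          ↔ v ∉ Set.range g := by
        rw [Fin.cons_injective_iff]
        exact ⟨fun h => h.1, fun h => ⟨h, hg⟩⟩
      by_cases hv : v ∉ Set.range g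
      · rw [if_pos (hinj.mpr hv), if_pos (hmem.mpr hv), Fin.prod_univ_succ]
        simp
      · rw [if_neg (fun h => hv (hinj.mp h)), if_neg (fun h => hv (hmem.mp h))]
    · rw [if_neg hg, Finset.sum_eq_zero]
      intro v _
      rw [if_neg]
      intro h
      exact hg (Fin.cons_injective_iff.mp h).2
  calc r * ∑ f : Fin n → V, (if Function.Injective f then ∏ i, p (f i) else 0)
      = ∑ g : Fin n → V, (if Function.Injective g then r * ∏ i, p (g i) else 0) := by
        rw [Finset.mul_sum]
        refine Finset.sum_congr rfl fun g _ => ?_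
        split <;> simp
    _ ≤ ∑ g : Fin n → V, (if Function.Injective g
          then (∑ v ∈ (Finset.univ.image g)ᶜ, p v) * ∏ i, p (g i) else 0) := by
        refine Finset.sum_le_sum fun g _ => ?_
        by_cases hg : Function.Injective g
        · rw [if_pos hg, if_pos hg]
          have hprod : 0 ≤ ∏ i, p (g i) := Finset.prod_nonneg fun i _ => hp0 (g i)
          have hcard : (Finset.univ.image g).card = n := by
            rw [Finset.card_image_of_injective _ hg, Finset.card_univ, Fintype.card_fin]
          have hne : (Finset.univ.image g).Nonempty := by
            rw [← Finset.card_pos, hcard]; omega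
          have hent := aux_ent p hp0 hp1 lam hH m hm hlam hV
            (Finset.univ.image g) hne (by omega : (Finset.univ.image g).card ≤ m)
          have hcompl : 1 - ∑ v ∈ Finset.univ.image g, p v
              = ∑ v ∈ (Finset.univ.image g)ᶜ, p v := by
            rw [← hp1, ← Finset.sum_add_sum_compl (Finset.univ.image g) p]; ring
          rw [hcompl] at hent
          exact mul_le_mul_of_nonneg_right hent hprod
        · rw [if_neg hg, if_neg hg]
    _ = ∑ g : Fin n → V, ∑ v : V,
          (if Function.Injective (Fin.cons v g : Fin (n+1) → V)
            then ∏ i, p ((Fin.cons v g : Fin (n+1) → V) i) else 0) := by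
        exact Finset.sum_congr rfl fun g _ => (inner g).symm

/-- If `V` is a random variable on a finite set with (binary) entropy at
least `lam`, and `V₁,…,V_m` are i.i.d. copies, then the probability that they are all
distinct is at least `((lam - 1 - log₂ m)/log₂ |𝒱|)^(m-1)`. -/
theorem babble_sampling_lemma {V : Type*} [Fintype V] [DecidableEq V]
    (p : V → ℝ) (hp0 : ∀ v, 0 ≤ p v) (hp1 : ∑ v, p v = 1)
    (lam : ℝ) (hH : lam ≤ ∑ v, -(p v * Real.logb 2 (p v)))
    (m : ℕ) (hm : 1 ≤ m)
    (hlam : 0 ≤ lam - 1 - Real.logb 2 m)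
    (hV : 2 ≤ Fintype.card V) :
    ((lam - 1 - Real.logb 2 m) / Real.logb 2 (Fintype.card V)) ^ (m - 1)
      ≤ ∑ f ∈ Finset.univ.filter (fun f : Fin m → V => Function.Injective f),
          ∏ i, p (f i) := by
  set r := (lam - 1 - Real.logb 2 m) / Real.logb 2 (Fintype.card V) with hr
  have hr0 : 0 ≤ r := by
    apply div_nonneg hlam
    apply (Real.logb_pos (by norm_num) (by exact_mod_cast hV : (1:ℝ) < Fintype.card V)).le
  have key : ∀ k : ℕ, k + 1 ≤ m →
      r ^ k ≤ ∑ f : Fin (k+1) → V, if Function.Injective f then ∏ i, p (f i) else 0 := by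
    intro k
    induction k with
    | zero =>
      intro _
      have hinj : ∀ f : Fin 1 → V, Function.Injective f :=
        fun f a b _ => Subsingleton.elim a b
      simp only [pow_zero, hinj, if_true]
      have e : ∑ f : Fin 1 → V, ∏ i, p (f i) = ∑ v : V, p v := by
        rw [← Equiv.sum_comp (Equiv.funUnique (Fin 1) V).symm
          (fun f : Fin 1 → V => ∏ i, p (f i))]
        refine Finset.sum_congr rfl fun v _ => ?_
        simp [Equiv.funUnique]
      rw [e, hp1]
    | succ k ih =>
      intro hk
      have h1 := ih (by omega)
      have h2 := aux_step p hp0 hp1 lam hH m hm hlam hV (k+1) (by omega) (by omega)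
      calc r ^ (k+1) = r * r ^ k := by ring
        _ ≤ r * ∑ f : Fin (k+1) → V, (if Function.Injective f then ∏ i, p (f i) else 0) :=
            mul_le_mul_of_nonneg_left h1 hr0
        _ ≤ ∑ f : Fin (k+2) → V, (if Function.Injective f then ∏ i, p (f i) else 0) := h2
  have hmeq : m - 1 + 1 = m := Nat.succ_pred_eq_of_pos hm
  have := key (m - 1) (by omega)
  rw [hmeq] at this
  rw [Finset.sum_filter]
  exact this
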